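/- Fix ℓ ≥ 3, write t = aℓ + b with 0 ≤ b ≤ ℓ−2, and let L_t(x) = (d(x)+1)^{t+1}(1 − d(x)^{ℓ−1−b})/(1 − d(x)^ℓ) where d(x) = x·c(x)² and c(x) is the Catalan series. Then L_t(x) = (p_{ℓ−1−b}(x)/p_ℓ(x))·c(x)^{aℓ}, where p_1=p_2=1 and p_{i+1}=p_i − x p_{i−1}. -/

import Mathlib

open PowerSeries

/-- The Catalan generating function `c(x)` in `ℚ[[x]]`. -/
noncomputable def catalanSeries : PowerSeries ℚ :=
  PowerSeries.mk fun n => (catalan n : ℚ)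

/-- `d(x) = x·c(x)²`. -/
noncomputable def dSeries : PowerSeries ℚ :=
  PowerSeries.X * _root_.catalanSeries ^ 2

/-- The polynomials `p_1 = p_2 = 1`, `p_{i+1} = p_i − x·p_{i−1}`, viewed in
`ℚ[[x]]` (we also set `p_0 = 1`, which is irrelevant). -/
noncomputable def pSeries : ℕ → PowerSeries ℚ
  | 0 => 1
  | 1 => 1
  | 2 => 1
  | (n + 3) => pSeries (n + 2) - PowerSeries.X * pSeries (n + 1)

lemma catalan_eq : PowerSeries.X * _root_.catalanSeries ^ 2 = _root_.catalanSeries - 1 := by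
  ext n
  cases n with
  | zero => simp [_root_.catalanSeries, PowerSeries.coeff_zero_eq_constantCoeff]
  | succ n =>
    rw [PowerSeries.coeff_succ_X_mul, sq, PowerSeries.coeff_mul]
    simp [_root_.catalanSeries, catalan_succ' n]

lemma dc : dSeries + 1 = _root_.catalanSeries := by
  rw [dSeries, catalan_eq]; ring

lemma constCoeff_d : constantCoeff dSeries = 0 := by
  simp [dSeries]

lemma constCoeff_c : constantCoeff _root_.catalanSeries = 1 := by
  have := dc
  have h2 := congrArg (constantCoeff (R := ℚ)) this
  simpa [constCoeff_d] using h2.symm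

lemma constCoeff_p (n : ℕ) : constantCoeff (pSeries n) = 1 := by
  induction n using Nat.strong_induction_on with
  | _ n ih =>
    match n with
    | 0 => simp [pSeries]
    | 1 => simp [pSeries]
    | 2 => simp [pSeries]
    | (n+3) =>
      rw [pSeries]
      simp [ih (n+2) (by omega)]

lemma key (n : ℕ) :
    pSeries (n+1) * _root_.catalanSeries ^ n * (1 - dSeries) = 1 - dSeries ^ (n+1) ∧
    pSeries (n+2) * _root_.catalanSeries ^ (n+1) * (1 - dSeries) = 1 - dSeries ^ (n+2) := by
  induction n with
  | zero =>
    constructor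
    · simp [pSeries]
    · rw [show pSeries 2 = 1 from rfl, pow_one, ← dc]; ring
  | succ n ih =>
    obtain ⟨h1, h2⟩ := ih
    refine ⟨h2, ?_⟩
    rw [show pSeries (n+3) = pSeries (n+2) - PowerSeries.X * pSeries (n+1) from rfl]
    have hd : dSeries = PowerSeries.X * _root_.catalanSeries ^ 2 := rfl
    have hc : dSeries + 1 = _root_.catalanSeries := dc
    linear_combination _root_.catalanSeries * h2 - dSeries * h1 +
      pSeries (n+1) * _root_.catalanSeries ^ n * (1 - dSeries) * hd +
      (dSeries ^ (n+2) - 1) * hc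

theorem stmt_11 (ℓ a b : ℕ) (hℓ : 3 ≤ ℓ) (hb : b ≤ ℓ - 2) :
    (dSeries + 1) ^ (a * ℓ + b + 1) * (1 - dSeries ^ (ℓ - 1 - b)) *
        (1 - dSeries ^ ℓ)⁻¹ =
      pSeries (ℓ - 1 - b) * (pSeries ℓ)⁻¹ * _root_.catalanSeries ^ (a * ℓ) := by
  obtain ⟨k, rfl⟩ : ∃ k, ℓ = b + k + 2 := ⟨ℓ - b - 2, by omega⟩
  set ℓ := b + k + 2 with hℓdef
  have hm : ℓ - 1 - b = k + 1 := by omega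
  rw [hm, dc]
  have e1 := (key k).1
  have e2 : pSeries ℓ * _root_.catalanSeries ^ (b + k + 1) * (1 - dSeries) = 1 - dSeries ^ ℓ := by
    have := (key (b + k + 1)).1
    simpa using this
  have hu1 : constantCoeff (1 - dSeries ^ ℓ) ≠ 0 := by
    simp [constCoeff_d, hℓdef]
  have hu2 : constantCoeff (pSeries ℓ) ≠ 0 := by
    simp [constCoeff_p]
  have hi1 : (1 - dSeries ^ ℓ) * (1 - dSeries ^ ℓ)⁻¹ = 1 :=
    PowerSeries.mul_inv_cancel _ hu1
  have hi2 : pSeries ℓ * (pSeries ℓ)⁻¹ = 1 :=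
    PowerSeries.mul_inv_cancel _ hu2
  have hne1 : (1 - dSeries ^ ℓ) ≠ 0 := fun h => hu1 (by rw [h]; simp)
  have hne2 : pSeries ℓ ≠ 0 := fun h => hu2 (by rw [h]; simp)
  apply mul_right_cancel₀ (mul_ne_zero hne1 hne2)
  rw [← e1]
  linear_combination (_root_.catalanSeries ^ (a * ℓ + b + 1) * pSeries (k+1) * _root_.catalanSeries ^ k *
      (1 - dSeries) * pSeries ℓ) * hi1 +
    - (pSeries (k+1) * _root_.catalanSeries ^ (a * ℓ) * (1 - dSeries ^ ℓ)) * hi2 +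
    (pSeries (k+1) * _root_.catalanSeries ^ (a * ℓ)) * e2
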